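/- Suppose 0 < λ < 1 and the critical point p_λ ∈ (0, π) of f_λ(x) = sin(x)/(x² + λ) satisfies f_λ(p_λ) ≥ π. Then with J = [0, p_λ] and K = [p_λ, π], we have J ∪ K ⊆ f_λ(J) ∩ f_λ(K); that is, f_λ is turbulent on [−f_λ(p_λ), f_λ(p_λ)]. -/
import Mathlib

theorem stmt_17 (lam : ℝ) (h0 : 0 < lam) (h1 : lam < 1) (p : ℝ)
    (hp0 : 0 < p) (hpπ : p < Real.pi)
    (hcrit : (p ^ 2 + lam) * Real.cos p - 2 * p * Real.sin p = 0)
    (hmax : Real.pi ≤ Real.sin p / (p ^ 2 + lam)) :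
    Set.Icc 0 p ∪ Set.Icc p Real.pi ⊆
      ((fun x : ℝ => Real.sin x / (x ^ 2 + lam)) '' Set.Icc 0 p) ∩
      ((fun x : ℝ => Real.sin x / (x ^ 2 + lam)) '' Set.Icc p Real.pi) := by
  set f : ℝ → ℝ := fun x : ℝ => Real.sin x / (x ^ 2 + lam) with hf
  have hcont : Continuous f := by
    apply Real.continuous_sin.div (by continuity)
    intro x; positivity
  have hf0 : f 0 = 0 := by simp [hf]
  have hfπ : f Real.pi = 0 := by simp [hf]
  intro x hx
  have hx01 : x ∈ Set.Icc (0:ℝ) Real.pi := by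
    rcases hx with h | h
    · exact ⟨h.1, h.2.trans hpπ.le⟩
    · exact ⟨hp0.le.trans h.1, h.2⟩
  have hxπ : x ∈ Set.Icc (0:ℝ) (f p) := ⟨hx01.1, hx01.2.trans hmax⟩
  constructor
  · have := intermediate_value_Icc hp0.le hcont.continuousOn
    rw [hf0] at this
    exact this hxπ
  · have := intermediate_value_Icc' hpπ.le hcont.continuousOn
    rw [hfπ] at this
    exact this hxπ
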